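/- (Leave-one-instance-out shortcut for two-step kernel ridge regression, Setting B.) Let m ≥ 2, let K be an m×m and G a q×q symmetric positive semidefinite real matrix, Y ∈ ℝ^{m×q}, λ_d, λ_t > 0, H^k = K(K + λ_d I)⁻¹, and H^g = G(G + λ_t I)⁻¹. Fix an instance index i; let K^{(i)} be K with row i and column i deleted, Y^{(i)} be Y with row i deleted, and κ_i ∈ ℝ^{m−1} be the i-th row of K with its i-th entry deleted. Then κ_iᵀ (K^{(i)} + λ_d I)⁻¹ Y^{(i)} H^g = (H^k_{i·} Y − H^k_{ii} Y_{i·}) H^g / (1 − H^k_{ii}). -/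

import Mathlib

open Matrix

/-- leave-one-instance-out shortcut for two-step KRR, Setting B:
training the two-step model on the `m−1` instances other than `i` and predicting
at instance `i` across all `q` tasks gives
`(H^k_{i·} Y − H^k_{ii} Y_{i·}) H^g / (1 − H^k_{ii})`. -/
theorem two_step_krr_stmt15 {m q : ℕ} (hm : 2 ≤ m)
    (K : Matrix (Fin m) (Fin m) ℝ) (hK : K.PosSemidef)
    (G : Matrix (Fin q) (Fin q) ℝ) (hG : G.PosSemidef)
    (Y : Matrix (Fin m) (Fin q) ℝ) (ld lt : ℝ) (hld : 0 < ld) (hlt : 0 < lt)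
    (i : Fin m)
    (Hk : Matrix (Fin m) (Fin m) ℝ) (hHk : Hk = K * (K + ld • 1)⁻¹)
    (Hg : Matrix (Fin q) (Fin q) ℝ) (hHg : Hg = G * (G + lt • 1)⁻¹)
    (Kdel : Matrix {x : Fin m // x ≠ i} {x : Fin m // x ≠ i} ℝ)
    (hKdel : Kdel = K.submatrix (fun x => x.val) (fun x => x.val))
    (Ydel : Matrix {x : Fin m // x ≠ i} (Fin q) ℝ)
    (hYdel : Ydel = Y.submatrix (fun x => x.val) id)
    (κ : {x : Fin m // x ≠ i} → ℝ) (hκ : κ = fun x => K i x.val) :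
    κ ᵥ* ((Kdel + ld • 1)⁻¹ * Ydel * Hg)
      = fun j => ((Hk * Y * Hg) i j - Hk i i * (Y * Hg) i j) / (1 - Hk i i) := by
  classical
  set A : Matrix (Fin m) (Fin m) ℝ := K + ld • 1 with hA
  have hApd : A.PosDef := Matrix.PosDef.posSemidef_add hK (by
    rw [smul_one_eq_diagonal]; exact .diagonal fun _ => hld)
  have hAdet : IsUnit A.det := isUnit_iff_ne_zero.mpr hApd.det_pos.ne'
  set B : Matrix (Fin m) (Fin m) ℝ := A⁻¹ with hB
  have hAB : A * B = 1 := Matrix.mul_nonsing_inv A hAdet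
  have hBA : B * A = 1 := Matrix.nonsing_inv_mul A hAdet
  have hBpd : B.PosDef := hApd.inv
  have hBii : 0 < B i i := by
    exact hBpd.diag_pos
  set Ad : Matrix {x : Fin m // x ≠ i} {x : Fin m // x ≠ i} ℝ := Kdel + ld • 1 with hAd
  have hKdelps : Kdel.PosSemidef := by rw [hKdel]; exact hK.submatrix _
  have hAdpd : Ad.PosDef := Matrix.PosDef.posSemidef_add hKdelps (by
    rw [smul_one_eq_diagonal]; exact .diagonal fun _ => hld)
  have hAddet : IsUnit Ad.det := isUnit_iff_ne_zero.mpr hAdpd.det_pos.ne'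
  have hAdsub : ∀ x y : {x : Fin m // x ≠ i}, Ad x y = A x.val y.val := by
    intro x y
    simp [hAd, hKdel, hA, Matrix.one_apply, Matrix.add_apply, Matrix.smul_apply,
      Matrix.submatrix_apply, Subtype.ext_iff]
  -- sum over subtype
  have hsum : ∀ f : Fin m → ℝ, (∑ y : {x : Fin m // x ≠ i}, f y.val) = (∑ y, f y) - f i := by
    intro f
    rw [← Finset.sum_subtype (Finset.univ.erase i)
      (by intro x; simp [Finset.mem_erase]) f]
    rw [← Finset.sum_erase_add Finset.univ f (Finset.mem_univ i)]
    ring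
  set w : {x : Fin m // x ≠ i} → ℝ := fun x => -(B i x.val) / B i i with hw
  have hwAd : w ᵥ* Ad = κ := by
    funext x
    have h1 : ∀ y : {x : Fin m // x ≠ i}, w y * Ad y x
        = (fun z => -(B i z) / B i i * A z x.val) y.val := by
      intro y; rw [hAdsub]
    simp only [vecMul, dotProduct, h1]
    rw [hsum (fun z => -(B i z) / B i i * A z x.val)]
    have h2 : (∑ y : Fin m, -(B i y) / B i i * A y x.val)
        = -(1 / B i i) * ((B * A) i x.val) := by
      rw [Matrix.mul_apply, Finset.mul_sum]
      exact Finset.sum_congr rfl fun y _ => by ring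
    rw [h2, hBA]
    have h3 : (1 : Matrix (Fin m) (Fin m) ℝ) i x.val = 0 :=
      Matrix.one_apply_ne (Ne.symm x.prop)
    have h4 : A i x.val = K i x.val := by
      simp [hA, Matrix.add_apply, Matrix.smul_apply, Matrix.one_apply, Ne.symm x.prop]
    rw [h3, hκ]
    field_simp [h4]
    rw [h4]; ring
  have hκw : κ ᵥ* Ad⁻¹ = w := by
    rw [← hwAd, Matrix.vecMul_vecMul, Matrix.mul_nonsing_inv _ hAddet, Matrix.vecMul_one]
  -- Hk structure
  have hHkB : Hk = 1 - ld • B := by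
    have hKA : K = A - ld • 1 := by rw [hA]; abel
    rw [hHk, hKA, Matrix.sub_mul, hAB, Matrix.smul_mul, Matrix.one_mul]
  have hHkii : Hk i i = 1 - ld * B i i := by
    rw [hHkB]; simp [Matrix.sub_apply, Matrix.smul_apply, Matrix.one_apply]
  have hHkY : ∀ t, (Hk * Y) i t = Y i t - ld * (B * Y) i t := by
    intro t
    rw [hHkB, Matrix.sub_mul, Matrix.one_mul, Matrix.smul_mul]
    simp [Matrix.sub_apply, Matrix.smul_apply]
  have hden : 1 - Hk i i = ld * B i i := by rw [hHkii]; ring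
  have hldB : ld * B i i ≠ 0 := by positivity
  -- the middle vector
  have hmid : ∀ t, (κ ᵥ* (Ad⁻¹ * Ydel)) t = Y i t - (B * Y) i t / B i i := by
    intro t
    rw [← Matrix.vecMul_vecMul, hκw]
    have h1 : ∀ y : {x : Fin m // x ≠ i}, w y * Ydel y t
        = (fun z => -(B i z) / B i i * Y z t) y.val := by
      intro y; rw [hYdel]; rfl
    simp only [vecMul, dotProduct, h1]
    rw [hsum (fun z => -(B i z) / B i i * Y z t)]
    have h2 : (∑ y : Fin m, -(B i y) / B i i * Y y t)
        = -(1 / B i i) * ((B * Y) i t) := by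
      rw [Matrix.mul_apply, Finset.mul_sum]
      exact Finset.sum_congr rfl fun y _ => by ring
    rw [h2]
    field_simp
    ring
  funext j
  rw [← Matrix.vecMul_vecMul]
  have hLHS : ((κ ᵥ* (Ad⁻¹ * Ydel)) ᵥ* Hg) j
      = ∑ t, (Y i t - (B * Y) i t / B i i) * Hg t j := by
    simp only [vecMul, dotProduct] at hmid ⊢
    exact Finset.sum_congr rfl fun t _ => by rw [hmid t]
  have e1 : (Hk * Y * Hg) i j = ∑ t, (Hk * Y) i t * Hg t j := Matrix.mul_apply
  have e2 : (Y * Hg) i j = ∑ t, Y i t * Hg t j := Matrix.mul_apply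
  rw [hLHS, hden, e1, e2, Finset.mul_sum, ← Finset.sum_sub_distrib, Finset.sum_div]
  refine Finset.sum_congr rfl fun t _ => ?_
  rw [hHkY, hHkii]
  field_simp
  ring
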